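/- Let q and d be positive integers, and let B be a box of height h containing a feasible packing of vertical rectangles, each of width exactly 1, each of height at least h/d, and with at most q distinct heights among them. Then all these rectangles can be repacked inside B into at most d·(q+1)^d vertical containers (boxes in which rectangles of equal height are stacked side by side), such that the total area of the containers equals the total area of the rectangles. -/

import Mathlib

open Finset
open scoped Classical

/-- `x y` give the bottom-left corners of an axis-aligned, non-overlapping packing of the
rectangles indexed by `s` (with widths `w` and heights `h`) inside a `W × H` box. -/
def IsPacking {ι : Type*} (s : Finset ι) (w h : ι → ℝ) (W H : ℝ) (x y : ι → ℝ) : Prop :=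
  (∀ i ∈ s, 0 ≤ x i ∧ x i + w i ≤ W ∧ 0 ≤ y i ∧ y i + h i ≤ H) ∧
  (∀ i ∈ s, ∀ j ∈ s, i ≠ j →
    x i + w i ≤ x j ∨ x j + w j ≤ x i ∨ y i + h i ≤ y j ∨ y j + h j ≤ y i)

/-- Sum of lengths of pairwise disjoint subintervals of `[0,H]` is at most `H`. -/
lemma sum_heights_le {ι : Type*} (s : Finset ι) (y h : ι → ℝ) (H : ℝ) (hH : 0 ≤ H)
    (hb : ∀ i ∈ s, 0 ≤ y i ∧ y i + h i ≤ H) (hpos : ∀ i ∈ s, 0 < h i)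
    (hdisj : ∀ i ∈ s, ∀ j ∈ s, i ≠ j → y i + h i ≤ y j ∨ y j + h j ≤ y i) :
    ∑ i ∈ s, h i ≤ H := by
  have hdisjset : (↑s : Set ι).PairwiseDisjoint (fun i => Set.Ioc (y i) (y i + h i)) := by
    intro i hi j hj hij
    rcases hdisj i hi j hj hij with hc | hc
    · exact Set.Ioc_disjoint_Ioc.2 (le_trans (min_le_left _ _) (le_trans hc (le_max_right _ _)))
    · exact Set.Ioc_disjoint_Ioc.2 (le_trans (min_le_right _ _) (le_trans hc (le_max_left _ _)))
  have hmeas : MeasureTheory.volume (⋃ i ∈ s, Set.Ioc (y i) (y i + h i))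
      = ∑ i ∈ s, MeasureTheory.volume (Set.Ioc (y i) (y i + h i)) :=
    MeasureTheory.measure_biUnion_finset hdisjset (fun i _ => measurableSet_Ioc)
  have hsub : (⋃ i ∈ s, Set.Ioc (y i) (y i + h i)) ⊆ Set.Ioc 0 H := by
    intro z hz
    simp only [Set.mem_iUnion] at hz
    obtain ⟨i, hi, hzi⟩ := hz
    exact ⟨lt_of_le_of_lt (hb i hi).1 hzi.1, le_trans hzi.2 (hb i hi).2⟩
  have h1 : ∑ i ∈ s, MeasureTheory.volume (Set.Ioc (y i) (y i + h i))
      ≤ ENNReal.ofReal H := by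
    rw [← hmeas]
    calc MeasureTheory.volume (⋃ i ∈ s, Set.Ioc (y i) (y i + h i))
        ≤ MeasureTheory.volume (Set.Ioc 0 H) := MeasureTheory.measure_mono hsub
      _ = ENNReal.ofReal H := by rw [Real.volume_Ioc]; norm_num
  have h2 : ∑ i ∈ s, MeasureTheory.volume (Set.Ioc (y i) (y i + h i))
      = ENNReal.ofReal (∑ i ∈ s, h i) := by
    rw [ENNReal.ofReal_sum_of_nonneg (fun i hi => (hpos i hi).le)]
    refine Finset.sum_congr rfl fun i hi => ?_
    rw [Real.volume_Ioc]; ring_nf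
  rw [h2] at h1
  exact (ENNReal.ofReal_le_ofReal_iff hH).1 h1

/-- A packing of unit-width rectangles can be normalized to have natural-number x-coordinates. -/
lemma integralize {ι : Type*} (s : Finset ι) (ht : ι → ℝ) (W H : ℝ) :
    ∀ n (x y : ι → ℝ), (s.filter (fun i => ¬ ∃ m : ℕ, x i = m)).card = n →
    IsPacking s (fun _ => (1:ℝ)) ht W H x y →
    ∃ x' y', IsPacking s (fun _ => (1:ℝ)) ht W H x' y' ∧ ∀ i ∈ s, ∃ m : ℕ, x' i = m := by
  intro n
  induction n using Nat.strong_induction_on with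
  | _ n IH =>
    intro x y hcard hp
    rcases Nat.eq_zero_or_pos n with hn | hn
    · refine ⟨x, y, hp, fun i hi => ?_⟩
      subst hn
      by_contra hne
      have hmem : i ∈ s.filter (fun i => ¬ ∃ m : ℕ, x i = m) := Finset.mem_filter.2 ⟨hi, hne⟩
      rw [Finset.card_eq_zero.1 hcard] at hmem
      exact Finset.notMem_empty i hmem
    · -- pick the minimal non-integral rectangle
      have hne : (s.filter (fun i => ¬ ∃ m : ℕ, x i = m)).Nonempty := by
        rw [← Finset.card_pos, hcard]; exact hn
      obtain ⟨i0, hi0, hmin⟩ := Finset.exists_min_image _ x hne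
      obtain ⟨hi0s, hi0ni⟩ := Finset.mem_filter.1 hi0
      have hx0 : 0 ≤ x i0 := (hp.1 i0 hi0s).1
      set x' : ι → ℝ := Function.update x i0 ((⌊x i0⌋ : ℤ) : ℝ) with hx'
      have hfloor_nonneg : (0:ℤ) ≤ ⌊x i0⌋ := Int.floor_nonneg.2 hx0
      have htn : ((⌊x i0⌋.toNat : ℤ)) = ⌊x i0⌋ := Int.toNat_of_nonneg hfloor_nonneg
      have htnR : ((⌊x i0⌋.toNat : ℕ) : ℝ) = ((⌊x i0⌋ : ℤ) : ℝ) := by exact_mod_cast htn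
      have hxi0' : x' i0 = ((⌊x i0⌋ : ℤ) : ℝ) := Function.update_self _ _ _
      have hxother : ∀ j, j ≠ i0 → x' j = x j := fun j hj => Function.update_of_ne hj _ _
      have hfloor_lt : ((⌊x i0⌋:ℤ):ℝ) < x i0 := by
        rcases lt_or_eq_of_le (Int.floor_le (x i0)) with h | h
        · exact h
        · exact absurd ⟨⌊x i0⌋.toNat, h.symm.trans htnR.symm⟩ hi0ni
      -- key disjointness for the moved rectangle against any other
      have hkey : ∀ j ∈ s, j ≠ i0 →
          x' i0 + 1 ≤ x' j ∨ x' j + 1 ≤ x' i0 ∨ y i0 + ht i0 ≤ y j ∨ y j + ht j ≤ y i0 := by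
        intro j hjs hj
        rw [hxother j hj, hxi0']
        rcases hp.2 i0 hi0s j hjs (fun h => hj h.symm) with hc | hc | hc | hc
        · have hc : x i0 + 1 ≤ x j := hc
          left; linarith [Int.floor_le (x i0)]
        · have hc : x j + 1 ≤ x i0 := hc
          by_cases hjint : ∃ m : ℕ, x j = m
          · obtain ⟨m, hm⟩ := hjint
            right; left
            have hmle : ((m:ℤ) + 1) ≤ ⌊x i0⌋ := Int.le_floor.2 (by push_cast; rw [← hm]; exact hc)
            have hR : (((m:ℤ):ℝ) + 1) ≤ ((⌊x i0⌋:ℤ):ℝ) := by exact_mod_cast hmle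
            rw [hm]; push_cast at hR ⊢; linarith
          · exfalso
            have hjmem : j ∈ s.filter (fun i => ¬ ∃ m : ℕ, x i = m) := Finset.mem_filter.2 ⟨hjs, hjint⟩
            have := hmin j hjmem
            linarith
        · right; right; left; exact hc
        · right; right; right; exact hc
      have hp' : IsPacking s (fun _ => (1:ℝ)) ht W H x' y := by
        constructor
        · intro i hi
          by_cases hii : i = i0
          · subst hii
            rw [hxi0']
            have h2 : x i + 1 ≤ W := (hp.1 i hi).2.1
            refine ⟨by exact_mod_cast hfloor_nonneg, ?_, (hp.1 i hi).2.2.1, (hp.1 i hi).2.2.2⟩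
            show ((⌊x i⌋:ℤ):ℝ) + 1 ≤ W
            linarith [Int.floor_le (x i)]
          · rw [hxother i hii]; exact hp.1 i hi
        · intro i hi j hj hij
          by_cases hii : i = i0
          · subst hii
            exact hkey j hj (fun h => hij h.symm)
          · by_cases hjj : j = i0
            · subst hjj
              rcases hkey i hi hii with h | h | h | h
              · right; left; exact h
              · left; exact h
              · right; right; right; exact h
              · right; right; left; exact h
            · rw [hxother i hii, hxother j hjj]
              exact hp.2 i hi j hj hij
      -- the filter strictly decreased
      have hsub : s.filter (fun i => ¬ ∃ m : ℕ, x' i = m) ⊆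
          (s.filter (fun i => ¬ ∃ m : ℕ, x i = m)).erase i0 := by
        intro j hj
        obtain ⟨hjs, hjni⟩ := Finset.mem_filter.1 hj
        have hji0 : j ≠ i0 := by
          rintro rfl
          exact hjni ⟨⌊x j⌋.toNat, hxi0'.trans htnR.symm⟩
        exact Finset.mem_erase.2 ⟨hji0, Finset.mem_filter.2 ⟨hjs, by rwa [← hxother j hji0]⟩⟩
      have hlt : (s.filter (fun i => ¬ ∃ m : ℕ, x' i = m)).card < n := by
        calc (s.filter (fun i => ¬ ∃ m : ℕ, x' i = m)).card
            ≤ ((s.filter (fun i => ¬ ∃ m : ℕ, x i = m)).erase i0).card := Finset.card_le_card hsub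
          _ < (s.filter (fun i => ¬ ∃ m : ℕ, x i = m)).card := Finset.card_erase_lt_of_mem hi0
          _ = n := hcard
      exact IH _ hlt x' y rfl hp'

lemma card_types_le (T : Finset (Multiset ℝ)) (Hs : Finset ℝ) (d q : ℕ)
    (hcard : ∀ τ ∈ T, Multiset.card τ ≤ d) (hmem : ∀ τ ∈ T, ∀ v ∈ τ, v ∈ Hs)
    (hq : Hs.card ≤ q) : T.card ≤ (q+1)^d := by
  set F : Finset (Fin d → Option ℝ) :=
    Fintype.piFinset (fun _ => insert none (Hs.image some)) with hF
  set φ : Multiset ℝ → (Fin d → Option ℝ) :=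
    fun τ => fun j => (τ.sort (· ≤ ·))[(j:ℕ)]? with hφ
  have hlen : ∀ τ ∈ T, (τ.sort (· ≤ ·)).length ≤ d := by
    intro τ hτ; rw [Multiset.length_sort]; exact hcard τ hτ
  have hmaps : ∀ τ ∈ T, φ τ ∈ F := by
    intro τ hτ
    rw [hF, Fintype.mem_piFinset]
    intro j
    rcases h : (τ.sort (· ≤ ·))[(j:ℕ)]? with _ | v
    · simp [hφ, h]
    · have hv : v ∈ τ.sort (· ≤ ·) := by
        have := List.mem_of_getElem? h
        exact this
      have : v ∈ τ := by rwa [← Multiset.mem_sort (· ≤ ·)]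
      simp only [hφ, h]
      exact Finset.mem_insert.2 (Or.inr (Finset.mem_image.2 ⟨v, hmem τ hτ v this, rfl⟩))
  have hinj : Set.InjOn φ T := by
    intro τ hτ τ' hτ' heq
    have hlists : τ.sort (· ≤ ·) = τ'.sort (· ≤ ·) := by
      apply List.ext_getElem?
      intro n
      by_cases hnd : n < d
      · have := congrFun heq ⟨n, hnd⟩
        simpa [hφ] using this
      · push_neg at hnd
        rw [List.getElem?_eq_none (le_trans (hlen τ hτ) hnd),
          List.getElem?_eq_none (le_trans (hlen τ' hτ') hnd)]
    have : (↑(τ.sort (· ≤ ·)) : Multiset ℝ) = ↑(τ'.sort (· ≤ ·)) := by rw [hlists]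
    rwa [Multiset.sort_eq, Multiset.sort_eq] at this
  calc T.card ≤ F.card := Finset.card_le_card_of_injOn φ hmaps hinj
    _ = (insert none (Hs.image some)).card ^ d := by
        rw [hF, Fintype.card_piFinset]; simp
    _ ≤ (q+1)^d := by
        apply Nat.pow_le_pow_left
        calc (insert none (Hs.image some)).card ≤ (Hs.image some).card + 1 :=
              Finset.card_insert_le _ _
          _ ≤ Hs.card + 1 := by gcongr; exact Finset.card_image_le
          _ ≤ q + 1 := by omega

lemma sum_take_mono {l : List ℝ} (h : ∀ v ∈ l, 0 ≤ v) {m n : ℕ} (hmn : m ≤ n) :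
    (l.take m).sum ≤ (l.take n).sum := by
  have hsplit : (l.take n).take m ++ (l.take n).drop m = l.take n := List.take_append_drop m _
  rw [List.take_take, min_eq_left hmn] at hsplit
  have h0 : 0 ≤ ((l.take n).drop m).sum :=
    List.sum_nonneg fun v hv => h v (List.take_subset _ _ (List.drop_subset _ _ hv))
  calc (l.take m).sum ≤ (l.take m).sum + ((l.take n).drop m).sum := by linarith
    _ = (l.take n).sum := by rw [← List.sum_append, hsplit]

lemma sum_take_le_sum {l : List ℝ} (h : ∀ v ∈ l, 0 ≤ v) (m : ℕ) :
    (l.take m).sum ≤ l.sum := by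
  have h0 : 0 ≤ (l.drop m).sum := List.sum_nonneg fun v hv => h v (List.drop_subset _ _ hv)
  calc (l.take m).sum ≤ (l.take m).sum + (l.drop m).sum := by linarith
    _ = l.sum := by rw [← List.sum_append, List.take_append_drop]

set_option maxHeartbeats 1000000

/-- **Repacking into vertical containers.**  Suppose the box `B` of width `W` and height `H`
contains a feasible packing of the rectangles of `s`, each of width `1`, height at least
`H/d`, and with at most `q` distinct heights.  Then all the rectangles can be repacked inside
`B` into at most `d·(q+1)^d` vertical containers: containers are non-overlapping boxes
inside `B`, each rectangle is assigned (by `σ`) to a container of exactly its height, each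
container is fully occupied side-by-side by its rectangles (its width equals the number of
unit-width rectangles assigned to it), and the total area of the containers equals the total
area of the rectangles. -/
theorem repack_vertical_containers {ι : Type*} (s : Finset ι) (ht : ι → ℝ)
    (W H : ℝ) (q d : ℕ) (hd : 0 < d) (hW : 0 < W) (hH : 0 < H)
    (hpack : ∃ x y, IsPacking s (fun _ => (1 : ℝ)) ht W H x y)
    (hmin : ∀ i ∈ s, H / (d : ℝ) ≤ ht i)
    (hq : (s.image ht).card ≤ q) :
    ∃ t : ℕ, t ≤ d * (q + 1) ^ d ∧
      ∃ (cw chh cx cy : Fin t → ℝ) (σ : ι → Fin t),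
        (∀ c, 0 ≤ cx c ∧ cx c + cw c ≤ W ∧ 0 ≤ cy c ∧ cy c + chh c ≤ H) ∧
        (∀ c c' : Fin t, c ≠ c' →
          cx c + cw c ≤ cx c' ∨ cx c' + cw c' ≤ cx c ∨
          cy c + chh c ≤ cy c' ∨ cy c' + chh c' ≤ cy c) ∧
        (∀ i ∈ s, ht i = chh (σ i)) ∧
        (∀ c, ((s.filter (fun i => σ i = c)).card : ℝ) = cw c) ∧
        (∑ c, cw c * chh c = ∑ i ∈ s, 1 * ht i) := by
  classical
  by_cases hs : s = ∅
  · subst hs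
    refine ⟨1, ?_, fun _ => 0, fun _ => 0, fun _ => 0, fun _ => 0, fun _ => ⟨0, one_pos⟩,
      ?_, ?_, ?_, ?_, ?_⟩
    · calc 1 ≤ d := hd
        _ ≤ d * (q+1)^d := Nat.le_mul_of_pos_right _ (pow_pos (Nat.succ_pos q) d)
    · intro c; exact ⟨le_refl 0, by simpa using hW.le, le_refl 0, by simpa using hH.le⟩
    · intro c c' hcc'; exact absurd (Subsingleton.elim c c') hcc'
    · intro i hi; simp at hi
    · intro c; simp
    · simp
  · have hsne : s.Nonempty := Finset.nonempty_iff_ne_empty.2 hs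
    obtain ⟨x0, y0, hp0⟩ := hpack
    obtain ⟨x, y, hp, hint⟩ := integralize s ht W H _ x0 y0 rfl hp0
    have hd0 : (0:ℝ) < (d:ℝ) := by exact_mod_cast hd
    have hHd : 0 < H / (d:ℝ) := div_pos hH hd0
    have hpos : ∀ i ∈ s, 0 < ht i := fun i hi => lt_of_lt_of_le hHd (hmin i hi)
    set κ : ι → ℕ := fun i => ⌊x i⌋.toNat with hκdef
    have hκx : ∀ i ∈ s, (κ i : ℝ) = x i := by
      intro i hi
      obtain ⟨m, hm⟩ := hint i hi
      simp [hκdef, hm]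
    set Sk : ℕ → Finset ι := fun k => s.filter (fun i => κ i = k) with hSkdef
    have hSksub : ∀ k, Sk k ⊆ s := fun k => Finset.filter_subset _ _
    have hSkmem : ∀ i ∈ s, i ∈ Sk (κ i) := fun i hi => Finset.mem_filter.2 ⟨hi, rfl⟩
    have hvert : ∀ k, ∀ i ∈ Sk k, ∀ j ∈ Sk k, i ≠ j → y i + ht i ≤ y j ∨ y j + ht j ≤ y i := by
      intro k i hi j hj hij
      obtain ⟨his, hik⟩ := Finset.mem_filter.1 hi
      obtain ⟨hjs, hjk⟩ := Finset.mem_filter.1 hj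
      have hxeq : x i = x j := by rw [← hκx i his, ← hκx j hjs, hik, hjk]
      rcases hp.2 i his j hjs hij with hc | hc | hc | hc
      · have hc : x i + 1 ≤ x j := hc; exfalso; rw [hxeq] at hc; linarith
      · have hc : x j + 1 ≤ x i := hc; exfalso; rw [hxeq] at hc; linarith
      · exact Or.inl hc
      · exact Or.inr hc
    have hsliceSum : ∀ k, ∑ i ∈ Sk k, ht i ≤ H := by
      intro k
      refine sum_heights_le (Sk k) y ht H hH.le ?_ (fun i hi => hpos i (hSksub k hi)) (hvert k)
      intro i hi
      exact ⟨(hp.1 i (hSksub k hi)).2.2.1, (hp.1 i (hSksub k hi)).2.2.2⟩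
    have hsliceCard : ∀ k, (Sk k).card ≤ d := by
      intro k
      by_contra hcon
      push_neg at hcon
      have h1 : (Sk k).card • (H/(d:ℝ)) ≤ ∑ i ∈ Sk k, ht i :=
        Finset.card_nsmul_le_sum _ _ _ (fun i hi => hmin i (hSksub k hi))
      rw [nsmul_eq_mul] at h1
      have h2 : ((d:ℝ)+1) ≤ ((Sk k).card : ℝ) := by exact_mod_cast hcon
      have h3 : (d:ℝ) * (H/(d:ℝ)) = H := by field_simp
      nlinarith [hsliceSum k]
    set type : ℕ → Multiset ℝ := fun k => (Sk k).val.map ht with htypedef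
    have htypecard : ∀ k, Multiset.card (type k) = (Sk k).card := by
      intro k; simp [htypedef]
    have htypesum : ∀ k, (type k).sum = ∑ i ∈ Sk k, ht i := fun k => rfl
    set K : Finset ℕ := s.image κ with hKdef
    set T : Finset (Multiset ℝ) := K.image type with hTdef
    have hκK : ∀ i ∈ s, κ i ∈ K := fun i hi => Finset.mem_image_of_mem κ hi
    have htypeT : ∀ k ∈ K, type k ∈ T := fun k hk => Finset.mem_image_of_mem type hk
    have hTmem : ∀ τ ∈ T, ∀ v ∈ τ, ∃ i ∈ s, ht i = v := by
      intro τ hτ v hv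
      obtain ⟨k, hk, rfl⟩ := Finset.mem_image.1 hτ
      obtain ⟨i, hi, rfl⟩ := Multiset.mem_map.1 hv
      exact ⟨i, hSksub k hi, rfl⟩
    have hTpos : ∀ τ ∈ T, ∀ v ∈ τ, H/(d:ℝ) ≤ v := by
      intro τ hτ v hv
      obtain ⟨i, hi, rfl⟩ := hTmem τ hτ v hv
      exact hmin i hi
    have hTsum : ∀ τ ∈ T, τ.sum ≤ H := by
      intro τ hτ
      obtain ⟨k, hk, rfl⟩ := Finset.mem_image.1 hτ
      rw [htypesum]; exact hsliceSum k
    have hTcard : ∀ τ ∈ T, Multiset.card τ ≤ d := by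
      intro τ hτ
      obtain ⟨k, hk, rfl⟩ := Finset.mem_image.1 hτ
      rw [htypecard]; exact hsliceCard k
    have hTbound : T.card ≤ (q+1)^d := by
      refine card_types_le T (s.image ht) d q hTcard ?_ hq
      intro τ hτ v hv
      obtain ⟨i, hi, rfl⟩ := hTmem τ hτ v hv
      exact Finset.mem_image_of_mem ht hi
    have hKne : K.Nonempty := hsne.image κ
    have hKW : ((K.card : ℕ) : ℝ) ≤ W := by
      have h1 : K.card ≤ K.max' hKne + 1 := by
        have hsub2 : K ⊆ Finset.range (K.max' hKne + 1) :=
          fun k hk => Finset.mem_range.2 (Nat.lt_succ_of_le (Finset.le_max' K k hk))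
        simpa using Finset.card_le_card hsub2
      have h2 : ((K.max' hKne : ℕ):ℝ) + 1 ≤ W := by
        obtain ⟨i, hi, hκi⟩ := Finset.mem_image.1 (K.max'_mem hKne)
        have hx1 : x i + 1 ≤ W := (hp.1 i hi).2.1
        rw [← hκi, hκx i hi]; exact hx1
      calc ((K.card:ℕ):ℝ) ≤ ((K.max' hKne : ℕ):ℝ) + 1 := by exact_mod_cast h1
        _ ≤ W := h2
    -- sorted slice lists
    haveI : IsTotal ι (fun i j => ht i ≤ ht j) := ⟨fun a b => le_total _ _⟩
    haveI : IsTrans ι (fun i j => ht i ≤ ht j) := ⟨fun a b c hab hbc => le_trans hab hbc⟩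
    set srt : Multiset ℝ → List ℝ := fun τ => τ.sort (· ≤ ·) with hsrtdef
    have hsrtlen : ∀ τ, (srt τ).length = Multiset.card τ := fun τ => Multiset.length_sort _
    have hsrtsum : ∀ τ, (srt τ).sum = τ.sum := by
      intro τ; simp only [hsrtdef]; rw [← Multiset.sum_coe, Multiset.sort_eq]
    have hsrtnn : ∀ τ ∈ T, ∀ v ∈ srt τ, 0 ≤ v := by
      intro τ hτ v hv
      exact le_trans hHd.le (hTpos τ hτ v ((Multiset.mem_sort _).1 hv))
    set lk : ℕ → List ι := fun k => List.insertionSort (fun i j => ht i ≤ ht j) (Sk k).toList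
      with hlkdef
    have hlkperm : ∀ k, (lk k).Perm (Sk k).toList := fun k => List.perm_insertionSort _ _
    have hlknodup : ∀ k, (lk k).Nodup := fun k => (hlkperm k).symm.nodup (Finset.nodup_toList _)
    have hlklen : ∀ k, (lk k).length = (Sk k).card :=
      fun k => ((hlkperm k).length_eq).trans (Finset.length_toList _)
    have hlkmem : ∀ k i, i ∈ lk k ↔ i ∈ Sk k :=
      fun k i => ((hlkperm k).mem_iff).trans Finset.mem_toList
    have hlkcoe : ∀ k, (↑(lk k) : Multiset ι) = (Sk k).val :=
      fun k => (Multiset.coe_eq_coe.2 (hlkperm k)).trans (Finset.coe_toList _)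
    have hmapsort : ∀ k, (lk k).map ht = srt (type k) := by
      intro k
      refine (fun hp h1 h2 => List.Perm.eq_of_pairwise' (r := ((· ≤ ·) : ℝ → ℝ → Prop)) h1 h2 hp) ?_ ?_ ?_
      · rw [← Multiset.coe_eq_coe, ← Multiset.map_coe, hlkcoe]
        simp only [hsrtdef]
        rw [Multiset.sort_eq]
      · exact List.Pairwise.map ht (fun a b hab => hab) (List.pairwise_insertionSort _ _)
      · rw [hsrtdef]; exact Multiset.pairwise_sort _ _
    have hMpos : 0 < T.card := Finset.card_pos.2 ⟨type (κ hsne.choose), htypeT _ (hκK _ hsne.choose_spec)⟩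
    set M := T.card with hMdef
    set e := T.equivFin with hedef
    set τf : Fin M → Multiset ℝ := fun a => ((e.symm a : {z // z ∈ T}) : Multiset ℝ) with hτfdef
    have hτfT : ∀ a, τf a ∈ T := fun a => (e.symm a).2
    set g : Fin M → ℕ := fun a => (K.filter (fun k => type k = τf a)).card with hgdef
    set O : Fin M → ℕ := fun a => ∑ b ∈ Finset.univ.filter (· < a), g b with hOdef
    have hOg : ∀ a, O a + g a ≤ ∑ b, g b := by
      intro a
      have hnotmem : a ∉ Finset.univ.filter (· < a) := by simp
      calc O a + g a = ∑ b ∈ insert a (Finset.univ.filter (· < a)), g b := by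
            rw [Finset.sum_insert hnotmem, Nat.add_comm]
        _ ≤ ∑ b, g b := Finset.sum_le_sum_of_subset (fun b _ => Finset.mem_univ b)
    have hOmono : ∀ a a' : Fin M, a < a' → O a + g a ≤ O a' := by
      intro a a' haa'
      have hnotmem : a ∉ Finset.univ.filter (· < a) := by simp
      have hsub2 : insert a (Finset.univ.filter (· < a)) ⊆ Finset.univ.filter (· < a') := by
        intro b hb
        rcases Finset.mem_insert.1 hb with rfl | hb
        · simp [haa']
        · simp only [Finset.mem_filter, Finset.mem_univ, true_and] at hb ⊢
          exact lt_trans hb haa'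
      calc O a + g a = ∑ b ∈ insert a (Finset.univ.filter (· < a)), g b := by
            rw [Finset.sum_insert hnotmem, Nat.add_comm]
        _ ≤ O a' := Finset.sum_le_sum_of_subset hsub2
    set cK : ℕ → Fin M := fun k => if h : k ∈ K then e ⟨type k, htypeT k h⟩ else ⟨0, hMpos⟩
      with hcKdef
    have hcKspec : ∀ k ∈ K, ∀ a, (cK k = a ↔ type k = τf a) := by
      intro k hk a
      simp only [hcKdef, dif_pos hk]
      rw [Equiv.apply_eq_iff_eq_symm_apply]
      constructor
      · intro h
        simp only [hτfdef]
        rw [← h]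
      · intro h
        exact Subtype.ext (by simpa [hτfdef] using h)
    have hgtot : ∑ a, g a = K.card := by
      rw [Finset.card_eq_sum_card_fiberwise (f := cK) (t := Finset.univ) (fun k _ => Finset.mem_univ _)]
      refine Finset.sum_congr rfl (fun a _ => ?_)
      rw [hgdef]
      refine congrArg Finset.card ?_
      refine (Finset.filter_congr ?_).symm
      intro k hk
      simp only [hcKspec k hk a]
    -- container indexing
    set tC := M * d with htCdef
    have htCpos : 0 < tC := Nat.mul_pos hMpos hd
    set ec : Fin M × Fin d ≃ Fin tC := finProdFinEquiv with hecdef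
    set pa : Fin tC → Fin M := fun c => (ec.symm c).1 with hpadef
    set pj : Fin tC → Fin d := fun c => (ec.symm c).2 with hpjdef
    set cw : Fin tC → ℝ :=
      fun c => if ((pj c : ℕ) < Multiset.card (τf (pa c))) then (g (pa c) : ℝ) else 0 with hcwdef
    set chh : Fin tC → ℝ := fun c => (srt (τf (pa c))).getD (pj c) 0 with hchhdef
    set cxf : Fin tC → ℝ := fun c => ((O (pa c) : ℕ) : ℝ) with hcxdef
    set cyf : Fin tC → ℝ := fun c => ((srt (τf (pa c))).take (pj c)).sum with hcydef
    have hidx : ∀ i ∈ s, (lk (κ i)).idxOf i < d := by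
      intro i hi
      calc (lk (κ i)).idxOf i < (lk (κ i)).length :=
            List.idxOf_lt_length_iff.2 ((hlkmem _ i).2 (hSkmem i hi))
        _ = (Sk (κ i)).card := hlklen _
        _ ≤ d := hsliceCard _
    set σ : ι → Fin tC := fun i =>
      if h : i ∈ s then ec (e ⟨type (κ i), htypeT _ (hκK i h)⟩, ⟨(lk (κ i)).idxOf i, hidx i h⟩)
      else ⟨0, htCpos⟩ with hσdef
    have hσeq : ∀ i, ∀ h : i ∈ s, σ i =
        ec (e ⟨type (κ i), htypeT _ (hκK i h)⟩, ⟨(lk (κ i)).idxOf i, hidx i h⟩) := by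
      intro i h
      simp only [hσdef, dif_pos h]
    have hσcomp : ∀ i, ∀ h : i ∈ s, pa (σ i) = e ⟨type (κ i), htypeT _ (hκK i h)⟩ ∧
        (pj (σ i) : ℕ) = (lk (κ i)).idxOf i := by
      intro i h
      constructor
      · simp only [hσeq i h, hpadef, Equiv.symm_apply_apply]
      · simp only [hσeq i h, hpjdef, Equiv.symm_apply_apply]
    have hτfσ : ∀ i, ∀ h : i ∈ s, τf (pa (σ i)) = type (κ i) := by
      intro i h
      rw [(hσcomp i h).1]
      simp only [hτfdef, Equiv.symm_apply_apply]
    -- heights condition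
    have hheights : ∀ i ∈ s, ht i = chh (σ i) := by
      intro i hi
      have hco := hσcomp i hi
      simp only [hchhdef]
      rw [hτfσ i hi, ← hmapsort (κ i), hco.2]
      have hlt : (lk (κ i)).idxOf i < (lk (κ i)).length :=
        List.idxOf_lt_length_iff.2 ((hlkmem _ i).2 (hSkmem i hi))
      have hltm : (lk (κ i)).idxOf i < ((lk (κ i)).map ht).length := by
        rwa [List.length_map]
      rw [List.getD_eq_getElem _ _ hltm, List.getElem_map, List.getElem_idxOf hlt]
    -- basic bounds on cw
    have hcwle : ∀ c, cw c ≤ (g (pa c) : ℝ) := by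
      intro c
      simp only [hcwdef]
      split
      · exact le_refl _
      · exact Nat.cast_nonneg _
    have hcwnn : ∀ c, 0 ≤ cw c := by
      intro c
      simp only [hcwdef]
      split
      · exact Nat.cast_nonneg _
      · exact le_refl 0
    -- G1
    have hxWbound : ∀ a, ((O a : ℕ):ℝ) + ((g a : ℕ):ℝ) ≤ W := by
      intro a
      have h1 : O a + g a ≤ K.card := le_of_le_of_eq (hOg a) hgtot
      calc ((O a : ℕ):ℝ) + ((g a : ℕ):ℝ) = ((O a + g a : ℕ):ℝ) := by push_cast; ring
        _ ≤ ((K.card:ℕ):ℝ) := by exact_mod_cast h1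
        _ ≤ W := hKW
    have hG1 : ∀ c, 0 ≤ cxf c ∧ cxf c + cw c ≤ W ∧ 0 ≤ cyf c ∧ cyf c + chh c ≤ H := by
      intro c
      refine ⟨by simp only [hcxdef]; exact Nat.cast_nonneg _, ?_, ?_, ?_⟩
      · calc cxf c + cw c ≤ cxf c + (g (pa c) : ℝ) := by linarith [hcwle c]
          _ ≤ W := hxWbound (pa c)
      · simp only [hcydef]
        exact List.sum_nonneg (fun v hv => hsrtnn _ (hτfT (pa c)) v (List.take_subset _ _ hv))
      · simp only [hcydef, hchhdef]
        have hnn := hsrtnn _ (hτfT (pa c))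
        have hsumle : (srt (τf (pa c))).sum ≤ H := by
          rw [hsrtsum]; exact hTsum _ (hτfT (pa c))
        by_cases hlt : ((pj c : ℕ)) < (srt (τf (pa c))).length
        · rw [List.getD_eq_getElem _ _ hlt, ← List.sum_take_succ _ _ hlt]
          exact le_trans (sum_take_le_sum hnn _) hsumle
        · push_neg at hlt
          rw [List.getD_eq_default _ _ hlt, List.take_of_length_le hlt]
          linarith
    -- G2 non-overlap
    have hG2 : ∀ c c' : Fin tC, c ≠ c' →
        cxf c + cw c ≤ cxf c' ∨ cxf c' + cw c' ≤ cxf c ∨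
        cyf c + chh c ≤ cyf c' ∨ cyf c' + chh c' ≤ cyf c := by
      intro c c' hcc'
      have hgroup : ∀ b b' : Fin tC, pa b < pa b' → cxf b + cw b ≤ cxf b' := by
        intro b b' hbb'
        calc cxf b + cw b ≤ ((O (pa b) : ℕ):ℝ) + ((g (pa b) : ℕ):ℝ) := by
              simp only [hcxdef]; linarith [hcwle b]
          _ = ((O (pa b) + g (pa b) : ℕ):ℝ) := by push_cast; ring
          _ ≤ ((O (pa b') : ℕ):ℝ) := by exact_mod_cast hOmono _ _ hbb'
          _ = cxf b' := by simp only [hcxdef]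
      rcases lt_trichotomy (pa c) (pa c') with hpa | hpa | hpa
      · exact Or.inl (hgroup c c' hpa)
      · -- same group
        have hjne : pj c ≠ pj c' := by
          intro heq
          exact hcc' (ec.symm.injective (Prod.ext hpa heq))
        by_cases hjc : ((pj c : ℕ)) < Multiset.card (τf (pa c))
        · by_cases hjc' : ((pj c' : ℕ)) < Multiset.card (τf (pa c'))
          · have hyle : ∀ b b' : Fin tC, pa b = pa b' → ((pj b : ℕ)) < (srt (τf (pa b))).length →
                ((pj b : ℕ)) < ((pj b' : ℕ)) → cyf b + chh b ≤ cyf b' := by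
              intro b b' hpab hjb hlt
              simp only [hcydef, hchhdef]
              rw [List.getD_eq_getElem _ _ hjb, ← List.sum_take_succ _ _ hjb, ← hpab]
              exact sum_take_mono (hsrtnn _ (hτfT (pa b))) hlt
            rcases lt_or_gt_of_ne hjne with hlt | hlt
            · refine Or.inr (Or.inr (Or.inl (hyle c c' hpa ?_ hlt)))
              rwa [hsrtlen]
            · refine Or.inr (Or.inr (Or.inr (hyle c' c hpa.symm ?_ hlt)))
              rwa [hsrtlen]
          · -- c' junk
            refine Or.inr (Or.inl ?_)
            simp only [hcwdef, if_neg hjc', hcxdef]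
            rw [hpa]
            linarith
        · -- c junk
          refine Or.inl ?_
          simp only [hcwdef, if_neg hjc, hcxdef]
          rw [hpa]
          linarith
      · exact Or.inr (Or.inl (hgroup c' c hpa))
    -- width condition
    have hwidth : ∀ c, ((s.filter (fun i => σ i = c)).card : ℝ) = cw c := by
      intro c
      by_cases hjc : ((pj c : ℕ)) < Multiset.card (τf (pa c))
      · simp only [hcwdef, if_pos hjc]
        have hcardeq : (s.filter (fun i => σ i = c)).card = g (pa c) := by
          rw [hgdef]
          refine Finset.card_bij (fun i _ => κ i) ?_ ?_ ?_
          · intro i hi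
            obtain ⟨his, hσi⟩ := Finset.mem_filter.1 hi
            refine Finset.mem_filter.2 ⟨hκK i his, ?_⟩
            show type (κ i) = τf (pa c)
            rw [← hσi, hτfσ i his]
          · intro i1 hi1 i2 hi2 hκeq
            have hκeq : κ i1 = κ i2 := hκeq
            obtain ⟨h1s, hσ1⟩ := Finset.mem_filter.1 hi1
            obtain ⟨h2s, hσ2⟩ := Finset.mem_filter.1 hi2
            have hj1 := (hσcomp i1 h1s).2
            have hj2 := (hσcomp i2 h2s).2
            rw [hσ1] at hj1
            rw [hσ2] at hj2
            have hm1 : i1 ∈ lk (κ i1) := (hlkmem _ i1).2 (hSkmem i1 h1s)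
            have hm2 : i2 ∈ lk (κ i1) := by
              rw [hκeq]; exact (hlkmem _ i2).2 (hSkmem i2 h2s)
            have hie : (lk (κ i1)).idxOf i1 = (lk (κ i1)).idxOf i2 := by
              rw [← hj1, hκeq, ← hj2]
            exact (List.idxOf_inj hm1).1 hie
          · intro k hk
            obtain ⟨hkK, hktype⟩ := Finset.mem_filter.1 hk
            have hlen : ((pj c : ℕ)) < (lk k).length := by
              rw [hlklen k, ← htypecard k, hktype]
              exact hjc
            have hmem2 : (lk k)[(pj c : ℕ)] ∈ Sk k := (hlkmem k _).1 (List.getElem_mem hlen)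
            have hise : (lk k)[(pj c : ℕ)] ∈ s := hSksub k hmem2
            have hκe : κ ((lk k)[(pj c : ℕ)]) = k := (Finset.mem_filter.1 hmem2).2
            refine ⟨(lk k)[(pj c : ℕ)], Finset.mem_filter.2 ⟨hise, ?_⟩, hκe⟩
            simp only [hσdef, dif_pos hise]
            rw [Equiv.apply_eq_iff_eq_symm_apply]
            have hsymm : ec.symm c = (pa c, pj c) := by
              rw [hpadef, hpjdef]
            rw [hsymm]
            refine Prod.ext ?_ ?_
            · show e ⟨type (κ ((lk k)[(pj c : ℕ)])), _⟩ = pa c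
              rw [Equiv.apply_eq_iff_eq_symm_apply]
              refine Subtype.ext ?_
              show type (κ ((lk k)[(pj c : ℕ)])) = ((e.symm (pa c) : {z // z ∈ T}) : Multiset ℝ)
              rw [hκe, hktype]
            · refine Fin.ext ?_
              show (lk (κ ((lk k)[(pj c : ℕ)]))).idxOf ((lk k)[(pj c : ℕ)]) = ((pj c : ℕ))
              rw [hκe]
              exact List.Nodup.idxOf_getElem (hlknodup k) _ hlen
        exact_mod_cast hcardeq
      · simp only [hcwdef, if_neg hjc]
        have hempty : s.filter (fun i => σ i = c) = ∅ := by
          rw [Finset.filter_eq_empty_iff]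
          intro i hi hσi
          apply hjc
          rw [← hσi, hτfσ i hi, (hσcomp i hi).2, htypecard]
          calc (lk (κ i)).idxOf i < (lk (κ i)).length :=
                List.idxOf_lt_length_iff.2 ((hlkmem _ i).2 (hSkmem i hi))
            _ = (Sk (κ i)).card := hlklen _
        rw [hempty]
        simp
    -- area condition
    have harea : ∑ c, cw c * chh c = ∑ i ∈ s, 1 * ht i := by
      have h1 : ∀ c, cw c * chh c = ∑ i ∈ s.filter (fun i => σ i = c), ht i := by
        intro c
        rw [← hwidth c]
        have h2 : ∑ i ∈ s.filter (fun i => σ i = c), ht i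
            = ∑ _i ∈ s.filter (fun i => σ i = c), chh c := by
          refine Finset.sum_congr rfl (fun i hi => ?_)
          obtain ⟨his, hσi⟩ := Finset.mem_filter.1 hi
          rw [hheights i his, hσi]
        rw [h2, Finset.sum_const, nsmul_eq_mul]
      rw [Finset.sum_congr rfl (fun c _ => h1 c), Finset.sum_fiberwise s σ ht]
      exact Finset.sum_congr rfl (fun i _ => (one_mul _).symm)
    refine ⟨tC, ?_, cw, chh, cxf, cyf, σ, hG1, hG2, hheights, hwidth, harea⟩
    calc tC = M * d := rfl
      _ ≤ (q+1)^d * d := Nat.mul_le_mul_right _ hTbound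
      _ = d * (q+1)^d := Nat.mul_comm _ _
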